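/- Let v : Ω⁰_ε → S¹ be a spin field and let ṽ : Ω_ε → S¹ be the field constructed as follows: on each lattice segment [i, j] with (i, j) ∈ Ω¹_ε, set θ̃(v)(i + s(j − i)) := θ(v)(i) + 2πs (β^e_{u(v)})_{i,j} for s ∈ [0,1], extend θ̃(v) inside each cell as a 0-homogeneous function with respect to the center of the cell, and define ṽ = e^{iθ̃(v)}. Then for each ε-square Q_i with i ∈ Ω²_ε, μ_v(Q_i) = (1/π) ∫_{∂Q_i} ṽ₁ (∂/∂s) ṽ₂ ds, i.e., the discrete vorticity of v in the cell Q_i equals (1/π) times the line integral of ṽ₁ dṽ₂ along the cell boundary; equivalently, the winding number of ṽ along ∂Q_i equals γ_v(i). -/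

import Mathlib

open MeasureTheory Filter

noncomputable section

/-- The position in `ℝ²` of the lattice point `i ∈ ℤ²` of the lattice `εℤ²`. -/
def pt (ε : ℝ) (i : ℤ × ℤ) : ℝ × ℝ := (ε * i.1, ε * i.2)

/-- `i` is a point of the lattice `Ω⁰_ε = εℤ² ∩ Ω`. -/
def latticePt (ε : ℝ) (Ω : Set (ℝ × ℝ)) (i : ℤ × ℤ) : Prop := pt ε i ∈ Ω

/-- `(i, j)` is a nearest-neighbor bond in `Ω¹_ε`: both endpoints lie in `Ω` and
`j = i + e₁` or `j = i + e₂` (so that `|i − j| = ε` and `i ≤ j` componentwise). -/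
def bond (ε : ℝ) (Ω : Set (ℝ × ℝ)) (i j : ℤ × ℤ) : Prop :=
  latticePt ε Ω i ∧ latticePt ε Ω j ∧ (j = i + (1, 0) ∨ j = i + (0, 1))

/-- `i ∈ Ω²_ε`: the closed cell `i + [0, ε]²` is contained in `Ω`. -/
def cellIn (ε : ℝ) (Ω : Set (ℝ × ℝ)) (i : ℤ × ℤ) : Prop :=
  Set.Icc (pt ε i) (pt ε i + (ε, ε)) ⊆ Ω

/-- The center of the cell `i + [0, ε]²`. -/
def cellCenter (ε : ℝ) (i : ℤ × ℤ) : ℝ × ℝ := pt ε i + (ε / 2, ε / 2)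

/-- The projection `P : ℝ → ℤ` onto the nearest integer (with the tie-breaking convention
making `t − P t ∈ (−1/2, 1/2]`). -/
def Pint (t : ℝ) : ℤ := ⌈t - 1 / 2⌉

/-- The elastic part of the discrete strain of `u` on the (oriented) bond from `i` to `j`:
`β^e_u = 𝐝u − P(𝐝u) ∈ (−1/2, 1/2]`, where `𝐝u_{i,j} = u(j) − u(i)`. -/
def betaE (u : ℤ × ℤ → ℝ) (i j : ℤ × ℤ) : ℝ :=
  (u j - u i) - (Pint (u j - u i) : ℝ)

/-- The plastic part of the discrete strain: `β^p_u = P(𝐝u) ∈ ℤ`. -/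
def betaP (u : ℤ × ℤ → ℝ) (i j : ℤ × ℤ) : ℝ := (Pint (u j - u i) : ℝ)

/-- The discrete curl of a bond function `ξ` around the cell with lower-left corner `i`:
`𝐝ξ(i) = ξ_{i,i+e₂} + ξ_{i+e₂,i+e₁+e₂} − ξ_{i+e₁,i+e₁+e₂} − ξ_{i,i+e₁}`. -/
def dcurl (ξ : ℤ × ℤ → ℤ × ℤ → ℝ) (i : ℤ × ℤ) : ℝ :=
  ξ i (i + (0, 1)) + ξ (i + (0, 1)) (i + (1, 1)) - ξ (i + (1, 0)) (i + (1, 1)) -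
    ξ i (i + (1, 0))

/-- The discrete dislocation function `α_u(i) = 𝐝β^e_u(i)`. -/
def alphaSD (u : ℤ × ℤ → ℝ) (i : ℤ × ℤ) : ℝ := dcurl (betaE u) i

/-- The discrete screw-dislocation energy
`SD_ε(u) = ½ Σ_{(i,j) ∈ Ω¹_ε} dist²(u(i) − u(j), ℤ)`. -/
def SDen (ε : ℝ) (Ω : Set (ℝ × ℝ)) (u : ℤ × ℤ → ℝ) : ℝ :=
  (1 / 2) * ∑' b : {b : (ℤ × ℤ) × (ℤ × ℤ) // bond ε Ω b.1 b.2},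
    (betaE u b.1.1 b.1.2) ^ 2

/-- The total variation `|μ_u|(Ω)` of the discrete dislocation measure
`μ_u = Σ_{i ∈ Ω²_ε} α_u(i) δ_{i+(ε/2,ε/2)}`. -/
def SDtv (ε : ℝ) (Ω : Set (ℝ × ℝ)) (u : ℤ × ℤ → ℝ) : ℝ :=
  ∑' i : {i : ℤ × ℤ // cellIn ε Ω i}, |alphaSD u i|

/-- The phase `u(v) = θ(v)/2π ∈ [0, 1)` of a spin field `v` with values in `S¹ ⊆ ℂ`
(defined by `v = e^{2πi u(v)}`; any determination of the phase gives the same discrete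
vorticity). -/
def phaseu (v : ℤ × ℤ → ℂ) (l : ℤ × ℤ) : ℝ :=
  if 0 ≤ (v l).arg then (v l).arg / (2 * Real.pi) else (v l).arg / (2 * Real.pi) + 1

/-- The discrete vorticity `γ_v = α_{θ(v)/2π}` of a spin field `v`. -/
def gammaXY (v : ℤ × ℤ → ℂ) (i : ℤ × ℤ) : ℝ := alphaSD (phaseu v) i

/-- The `XY` energy `XY_ε(v) = ½ Σ_{(i,j) ∈ Ω¹_ε} |v(i) − v(j)|²`. -/
def XYen (ε : ℝ) (Ω : Set (ℝ × ℝ)) (v : ℤ × ℤ → ℂ) : ℝ :=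
  (1 / 2) * ∑' b : {b : (ℤ × ℤ) × (ℤ × ℤ) // bond ε Ω b.1 b.2},
    ‖v b.1.1 - v b.1.2‖ ^ 2

/-- The total variation `|μ_v|(Ω)` of the discrete vorticity measure. -/
def XYtv (ε : ℝ) (Ω : Set (ℝ × ℝ)) (v : ℤ × ℤ → ℂ) : ℝ :=
  ∑' i : {i : ℤ × ℤ // cellIn ε Ω i}, |gammaXY v i|

/-- The phase `θ(v) = 2π u(v) ∈ [0, 2π)` of a spin field. -/
def phaseTheta (v : ℤ × ℤ → ℂ) (l : ℤ × ℤ) : ℝ := 2 * Real.pi * phaseu v l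

/-- The tangential integral `∫_e ṽ₁ ∂ₛ ṽ₂ ds` of the interpolated field
`ṽ = e^{iθ̃}` along the lattice edge from `a` to `b`, where on the edge
`θ̃(a + s(b−a)) = θ(v)(a) + 2πs β^e_{u(v)}(a,b)` for `s ∈ [0,1]`. (Parametrizing the edge
by `s ∈ [0,1]`, the arclength factors cancel.) -/
def edgeInt (v : ℤ × ℤ → ℂ) (a b : ℤ × ℤ) : ℝ :=
  ∫ σ in (0 : ℝ)..1,
    Real.cos (phaseTheta v a + 2 * Real.pi * σ * betaE (phaseu v) a b) *
      deriv (fun τ => Real.sin (phaseTheta v a + 2 * Real.pi * τ * betaE (phaseu v) a b)) σ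

lemma edgeInt_eq (v : ℤ × ℤ → ℂ) (a b : ℤ × ℤ) :
    edgeInt v a b = Real.pi * betaE (phaseu v) a b +
      (Real.sin (2 * phaseTheta v b) - Real.sin (2 * phaseTheta v a)) / 4 := by
  set A := phaseTheta v a with hA
  set B := betaE (phaseu v) a b with hB
  set c := 2 * Real.pi * B with hc
  have hderiv : ∀ σ : ℝ,
      deriv (fun τ => Real.sin (A + 2 * Real.pi * τ * B)) σ =
        c * Real.cos (A + 2 * Real.pi * σ * B) := by
    intro σ
    have h1 : HasDerivAt (fun τ : ℝ => A + 2 * Real.pi * τ * B) c σ := by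
      have : HasDerivAt (fun τ : ℝ => 2 * Real.pi * τ * B) c σ := by
        simpa [hc, mul_comm, mul_assoc] using
          (((hasDerivAt_id σ).const_mul (2 * Real.pi)).mul_const B)
      simpa using this.const_add A
    have h2 := (Real.hasDerivAt_sin (A + 2 * Real.pi * σ * B)).comp σ h1
    simpa [mul_comm, Function.comp_def] using h2.deriv
  have hint : edgeInt v a b = ∫ σ in (0:ℝ)..1, c * Real.cos (A + 2 * Real.pi * σ * B) ^ 2 := by
    unfold edgeInt
    rw [← hA, ← hB]
    congr 1
    funext σ
    rw [hderiv σ]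
    ring
  rw [hint]
  have key : ∀ σ ∈ Set.uIcc (0:ℝ) 1,
      HasDerivAt (fun σ : ℝ => c * σ / 2 + Real.sin (2 * A + 2 * c * σ) / 4)
        (c * Real.cos (A + 2 * Real.pi * σ * B) ^ 2) σ := by
    intro σ _
    have h1 : HasDerivAt (fun σ : ℝ => c * σ / 2) (c / 2) σ := by
      simpa using ((hasDerivAt_id σ).const_mul c).div_const 2
    have h2 : HasDerivAt (fun σ : ℝ => 2 * A + 2 * c * σ) (2 * c) σ := by
      simpa using ((hasDerivAt_id σ).const_mul (2 * c)).const_add (2 * A)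
    have h3 := ((Real.hasDerivAt_sin (2 * A + 2 * c * σ)).comp σ h2).div_const 4
    have h4 := h1.add h3
    have hx : 2 * A + 2 * c * σ = 2 * (A + 2 * Real.pi * σ * B) := by
      rw [hc]; ring
    have hval : c / 2 + Real.cos (2 * A + 2 * c * σ) * (2 * c) / 4 =
        c * Real.cos (A + 2 * Real.pi * σ * B) ^ 2 := by
      rw [hx, Real.cos_sq]
      ring
    rw [← hval]
    exact h4
  have hcont : IntervalIntegrable (fun σ : ℝ => c * Real.cos (A + 2 * Real.pi * σ * B) ^ 2)
      MeasureTheory.volume 0 1 := by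
    exact (continuous_const.mul (((Real.continuous_cos).comp
      (continuous_const.add ((continuous_const.mul continuous_id).mul
        continuous_const))).pow 2)).intervalIntegrable 0 1
  rw [intervalIntegral.integral_eq_sub_of_hasDerivAt key hcont]
  have hθ : A + 2 * Real.pi * B = phaseTheta v b - 2 * Real.pi * (Pint (phaseu v b - phaseu v a) : ℝ) := by
    rw [hA, hB]
    unfold phaseTheta betaE
    ring
  have hsin : Real.sin (2 * A + 2 * c) = Real.sin (2 * phaseTheta v b) := by
    have h5 : 2 * A + 2 * c = 2 * phaseTheta v b + ((-(2 * (Pint (phaseu v b - phaseu v a)))) : ℤ) * (2 * Real.pi) := by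
      push_cast
      linear_combination 2 * hθ + 2 * hc
    rw [h5]
    exact_mod_cast Real.sin_add_int_mul_two_pi (2 * phaseTheta v b) (-(2 * (Pint (phaseu v b - phaseu v a))))
  simp only [mul_one, mul_zero, zero_div, add_zero, zero_add]
  rw [hsin, hc]
  ring

/-- For a spin field `v : Ω⁰_ε → S¹` and a cell `Q_i` with `i ∈ Ω²_ε`, the discrete
vorticity of `v` in the cell equals `(1/π)` times the line integral of `ṽ₁ dṽ₂` along the
boundary `∂Q_i` (traversed edgewise consistently with the discrete curl), where `ṽ` is the
interpolation of `v` obtained from the affinely interpolated phase on the edges (and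
extended `0`-homogeneously inside the cell): `μ_v(Q_i) = (1/π) ∫_{∂Q_i} ṽ₁ ∂ₛ ṽ₂ ds`. -/
theorem vorticity_eq_boundary_integral
    (Ω : Set (ℝ × ℝ)) (hΩo : IsOpen Ω) (hΩb : Bornology.IsBounded Ω)
    (ε : ℝ) (hε : 0 < ε) (v : ℤ × ℤ → ℂ) (hv : ∀ l, ‖v l‖ = 1)
    (i : ℤ × ℤ) (hi : cellIn ε Ω i) :
    gammaXY v i =
      (1 / Real.pi) *
        (edgeInt v i (i + (0, 1)) + edgeInt v (i + (0, 1)) (i + (1, 1)) -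
          edgeInt v (i + (1, 0)) (i + (1, 1)) - edgeInt v i (i + (1, 0))) := by
  have hpi := Real.pi_ne_zero
  unfold gammaXY alphaSD dcurl
  rw [edgeInt_eq, edgeInt_eq, edgeInt_eq, edgeInt_eq]
  field_simp
  ring
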